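/- arXiv:1409.7600 — 2 statements merged into one kernel-verified Lean document; each statement's English description precedes it below -/
import Mathlib

section
/- Let H₁ and H₂ be complex Hilbert spaces and B : H₁ × H₂ → ℂ a bounded sesquilinear form that is coercive in the sense that there exists λ > 0 with sup_{w ∈ H₁, w ≠ 0} |B(w,v)|/‖w‖ ≥ λ‖v‖ for all v ∈ H₂, and sup_{w ∈ H₂, w ≠ 0} |B(u,w)|/‖w‖ ≥ λ‖u‖ for all u ∈ H₁. Then for every bounded linear functional T on H₂ there exists a unique u_T ∈ H₁ such that B(v, u_T) = conj(T(v)) for all v ∈ H₂, and moreover ‖u_T‖_{H₁} ≤ (1/λ)‖T‖. -/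
open scoped ComplexConjugate
open InnerProductSpace

local notation "⟪" x ", " y "⟫" => @inner ℂ _ _ x y


/-- (Babuška–Lax–Milgram.)  Let `H₁, H₂` be complex Hilbert spaces and
`B` a bounded sesquilinear form (conjugate-linear in its `H₂`-variable, linear in its
`H₁`-variable, matching the convention `B(w,v) = ⟨∇w, A∇v⟩` of the paper) which is
coercive in the sense that `sup_{w ≠ 0} |B(w,v)|/‖w‖ ≥ λ‖v‖` in each variable, for
some `λ > 0`.  Then for every bounded linear functional `T` on `H₂` there is a unique
`u_T ∈ H₁` with `B(v, u_T) = conj (T v)` for all `v ∈ H₂`, and `‖u_T‖ ≤ (1/λ)‖T‖`. -/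
theorem stmt2 {H₁ H₂ : Type*}
    [NormedAddCommGroup H₁] [InnerProductSpace ℂ H₁] [CompleteSpace H₁]
    [NormedAddCommGroup H₂] [InnerProductSpace ℂ H₂] [CompleteSpace H₂]
    (B : H₂ → H₁ → ℂ)
    (hadd₁ : ∀ w w' u, B (w + w') u = B w u + B w' u)
    (hsmul₁ : ∀ (c : ℂ) w u, B (c • w) u = (starRingEnd ℂ) c * B w u)
    (hadd₂ : ∀ w u u', B w (u + u') = B w u + B w u')
    (hsmul₂ : ∀ (c : ℂ) w u, B w (c • u) = c * B w u)
    (Λ : ℝ) (hbound : ∀ w u, ‖B w u‖ ≤ Λ * ‖w‖ * ‖u‖)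
    (lam : ℝ) (hlam : 0 < lam)
    (hcoer₁ : ∀ u : H₁, lam * ‖u‖ ≤ sSup {c : ℝ | ∃ w : H₂, w ≠ 0 ∧ c = ‖B w u‖ / ‖w‖})
    (hcoer₂ : ∀ w : H₂, lam * ‖w‖ ≤ sSup {c : ℝ | ∃ u : H₁, u ≠ 0 ∧ c = ‖B w u‖ / ‖u‖}) :
    ∀ T : H₂ →L[ℂ] ℂ,
      (∃! u : H₁, ∀ v : H₂, B v u = (starRingEnd ℂ) (T v)) ∧
      (∀ u : H₁, (∀ v : H₂, B v u = (starRingEnd ℂ) (T v)) → ‖u‖ ≤ (1 / lam) * ‖T‖) := by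
  have hb' : ∀ w u, ‖B w u‖ ≤ (|Λ| * ‖u‖) * ‖w‖ := by
    intro w u
    have h1 := hbound w u
    have h2 := mul_le_mul_of_nonneg_right (le_abs_self Λ)
      (mul_nonneg (norm_nonneg w) (norm_nonneg u))
    nlinarith [h1, h2]
  set F : H₁ → (H₂ →L[ℂ] ℂ) := fun u =>
    LinearMap.mkContinuous
      { toFun := fun w => conj (B w u)
        map_add' := fun w w' => by simp [hadd₁, map_add]
        map_smul' := fun c w => by simp [hsmul₁, map_mul] }
      (|Λ| * ‖u‖)
      (fun w => by simpa using hb' w u) with hF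
  -- Riesz representation: S0 u is the vector representing F u.
  set S0 : H₁ → H₂ := fun u => (InnerProductSpace.toDual ℂ H₂).symm (F u) with hS0
  have hSinner : ∀ w u, ⟪w, S0 u⟫ = B w u := by
    intro w u
    have h2 : ⟪S0 u, w⟫ = conj (B w u) :=
      InnerProductSpace.toDual_symm_apply (𝕜 := ℂ) (E := H₂) (x := w) (y := F u)
    calc ⟪w, S0 u⟫ = conj ⟪S0 u, w⟫ := (inner_conj_symm _ _).symm
      _ = B w u := by rw [h2]; simp
  -- S0 is linear.
  have hSadd : ∀ u u', S0 (u + u') = S0 u + S0 u' := by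
    intro u u'
    refine ext_inner_left ℂ fun v => ?_
    rw [inner_add_right, hSinner, hSinner, hSinner, hadd₂]
  have hSsmul : ∀ (c : ℂ) u, S0 (c • u) = c • S0 u := by
    intro c u
    refine ext_inner_left ℂ fun v => ?_
    rw [inner_smul_right, hSinner, hSinner, hsmul₂]
  have hSbound : ∀ u, ‖S0 u‖ ≤ |Λ| * ‖u‖ := by
    intro u
    have : ‖S0 u‖ = ‖F u‖ := ((InnerProductSpace.toDual ℂ H₂).symm.norm_map (F u))
    rw [this]
    exact LinearMap.mkContinuous_norm_le _ (by positivity) _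
  set S : H₁ →L[ℂ] H₂ :=
    LinearMap.mkContinuous
      { toFun := S0, map_add' := hSadd, map_smul' := hSsmul } |Λ|
      (fun u => hSbound u) with hS
  have hSapp : ∀ u, S u = S0 u := fun u => rfl
  -- lower bound: lam * ‖u‖ ≤ ‖S u‖
  have hSlow : ∀ u, lam * ‖u‖ ≤ ‖S u‖ := by
    intro u
    refine (hcoer₁ u).trans (Real.sSup_le ?_ (norm_nonneg _))
    rintro c ⟨w, hw, rfl⟩
    rw [← hSinner w u]
    rw [div_le_iff₀ (norm_pos_iff.mpr hw)]
    calc ‖⟪w, S0 u⟫‖ ≤ ‖w‖ * ‖S0 u‖ := norm_inner_le_norm _ _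
      _ = ‖S u‖ * ‖w‖ := by rw [hSapp]; ring
  -- S is injective
  have hSinj : ∀ u u', S u = S u' → u = u' := by
    intro u u' h
    have h0 : S (u - u') = 0 := by rw [map_sub, h, sub_self]
    have := hSlow (u - u')
    rw [h0, norm_zero] at this
    have : ‖u - u'‖ ≤ 0 := by nlinarith
    rwa [← sub_eq_zero, ← norm_le_zero_iff]
  -- range S is closed
  have hanti : AntilipschitzWith (⟨lam, hlam.le⟩ : NNReal)⁻¹ S := by
    refine S.antilipschitz_of_bound fun x => ?_
    have := hSlow x
    change ‖x‖ ≤ lam⁻¹ * ‖S x‖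
    rw [inv_mul_eq_div, le_div_iff₀ hlam]
    linarith [hSlow x]
  have hclosed : IsClosed (Set.range S) := hanti.isClosed_range S.uniformContinuous
  have hclosed' : IsClosed ((LinearMap.range (S : H₁ →ₗ[ℂ] H₂) : Submodule ℂ H₂) : Set H₂) := by
    convert hclosed using 1
    exact LinearMap.coe_range _
  haveI : CompleteSpace (LinearMap.range (S : H₁ →ₗ[ℂ] H₂) : Submodule ℂ H₂) := hclosed'.completeSpace_coe
  -- range S is dense: orthogonal is trivial
  have horth : (LinearMap.range (S : H₁ →ₗ[ℂ] H₂))ᗮ = ⊥ := by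
    rw [Submodule.eq_bot_iff]
    intro v hv
    have hzero : ∀ u : H₁, B v u = 0 := by
      intro u
      have h0 := hv (S u) ⟨u, rfl⟩
      have h2 : ⟪v, S0 u⟫ = 0 := by
        rw [← inner_conj_symm, ← hSapp, h0, map_zero]
      rw [← hSinner v u]; exact h2
    have h2 := hcoer₂ v
    have hsup : sSup {c : ℝ | ∃ u : H₁, u ≠ 0 ∧ c = ‖B v u‖ / ‖u‖} ≤ 0 := by
      refine Real.sSup_le ?_ le_rfl
      rintro c ⟨u, hu, rfl⟩
      simp [hzero u]
    have : lam * ‖v‖ ≤ 0 := h2.trans hsup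
    have : ‖v‖ ≤ 0 := by nlinarith
    rwa [← norm_le_zero_iff]
  have hrange : LinearMap.range (S : H₁ →ₗ[ℂ] H₂) = ⊤ := Submodule.orthogonal_eq_bot_iff.mp horth
  -- now solve for each T
  intro T
  set t : H₂ := (InnerProductSpace.toDual ℂ H₂).symm T with ht
  have htinner : ∀ v, ⟪t, v⟫ = T v := fun v =>
    InnerProductSpace.toDual_symm_apply
  have htnorm : ‖t‖ = ‖T‖ := (InnerProductSpace.toDual ℂ H₂).symm.norm_map T
  -- characterization: (∀ v, B v u = conj (T v)) ↔ S u = t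
  have hchar : ∀ u : H₁, (∀ v : H₂, B v u = (starRingEnd ℂ) (T v)) ↔ S u = t := by
    intro u
    constructor
    · intro h
      refine ext_inner_left ℂ fun v => ?_
      rw [hSapp, hSinner, h v, ← htinner v, ← inner_conj_symm]
      simp
    · intro h v
      rw [← hSinner v u, ← hSapp, h, ← inner_conj_symm, htinner]
  obtain ⟨u₀, hu₀⟩ : ∃ u, S u = t := by
    have : t ∈ LinearMap.range (S : H₁ →ₗ[ℂ] H₂) := by rw [hrange]; trivial
    exact this
  refine ⟨⟨u₀, (hchar u₀).mpr hu₀, fun u hu => hSinj u u₀ (by rw [(hchar u).mp hu, hu₀])⟩, ?_⟩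
  intro u hu
  have hSu : S u = t := (hchar u).mp hu
  have := hSlow u
  rw [hSu, htnorm] at this
  rw [one_div, inv_mul_eq_div, le_div_iff₀ hlam]
  linarith
end

section
/- Let 0 < p₀ < q ≤ ∞, x₀ ∈ ℝ^d, R > 0, and let u ∈ L^q(B(x₀,R)). Suppose there are constants C₀, F ≥ 0 such that for all 0 < ρ < r < R, (∫_{B(x₀,ρ)} |u|^q)^{1/q} ≤ C₀ (r-ρ)^{-(d/p₀ - d/q)} (∫_{B(x₀,r)} |u|^{p₀})^{1/p₀} + F. Then for every 0 < p ≤ p₀ there is a constant C(p,q) depending only on p, p₀, q, C₀ such that for all 0 < ρ < r < R, (∫_{B(x₀,ρ)} |u|^q)^{1/q} ≤ C(p,q) (r-ρ)^{-(d/p - d/q)} (∫_{B(x₀,r)} |u|^p)^{1/p} + C(p,q) F. -/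
open MeasureTheory Metric ENNReal
open Filter Topology

private lemma young2 {a b : ℝ≥0∞} {τ : ℝ} (h0 : 0 ≤ τ) (h1 : τ ≤ 1) :
    a ^ τ * b ^ (1 - τ) ≤ a + b := by
  calc a ^ τ * b ^ (1 - τ)
      ≤ (a + b) ^ τ * (a + b) ^ (1 - τ) :=
        mul_le_mul' (ENNReal.rpow_le_rpow le_self_add h0)
          (ENNReal.rpow_le_rpow le_add_self (by linarith))
    _ = (a + b) ^ (τ + (1 - τ)) := (ENNReal.rpow_add_of_nonneg _ _ h0 (by linarith)).symm
    _ = a + b := by norm_num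

private lemma iterate_nat (g : ℕ → ℝ≥0∞) (M : ℝ≥0∞) (hM : M ≠ ∞) (hg : ∀ n, g n ≤ M)
    (ε : ℝ≥0∞) (hε : ε < 1) (a : ℕ → ℝ≥0∞)
    (step : ∀ n, g n ≤ ε * g (n + 1) + a n) :
    g 0 ≤ ∑' k, ε ^ k * a k := by
  have key : ∀ n, g 0 ≤ ε ^ n * g n + ∑ k ∈ Finset.range n, ε ^ k * a k := by
    intro n
    induction n with
    | zero => simp
    | succ n ih =>
      refine ih.trans ?_
      rw [Finset.sum_range_succ]
      calc ε ^ n * g n + ∑ k ∈ Finset.range n, ε ^ k * a k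
          ≤ ε ^ n * (ε * g (n + 1) + a n) + ∑ k ∈ Finset.range n, ε ^ k * a k := by
            gcongr
            exact step n
        _ = ε ^ (n + 1) * g (n + 1) + (∑ k ∈ Finset.range n, ε ^ k * a k + ε ^ n * a n) := by
            ring
  have htsum : ∑' n : ℕ, ε ^ n ≠ ∞ := by
    rw [ENNReal.tsum_geometric]
    exact ENNReal.inv_ne_top.2 fun h => hε.not_ge (tsub_eq_zero_iff_le.1 h)
  have h0 : Tendsto (fun n : ℕ => ε ^ n * M + ∑' k, ε ^ k * a k) atTop
      (𝓝 (0 * M + ∑' k, ε ^ k * a k)) :=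
    Tendsto.add_const _
      (ENNReal.Tendsto.mul_const (ENNReal.tendsto_atTop_zero_of_tsum_ne_top htsum) (Or.inr hM))
  rw [zero_mul, zero_add] at h0
  refine ge_of_tendsto' h0 fun n => ?_
  calc g 0 ≤ ε ^ n * g n + ∑ k ∈ Finset.range n, ε ^ k * a k := key n
    _ ≤ ε ^ n * M + ∑' k, ε ^ k * a k := by
        gcongr
        · exact hg n
        · exact ENNReal.sum_le_tsum _

private lemma interp_fin {α : Type*} [MeasurableSpace α] {μ : Measure α} {u : α → ℂ}
    (hu : AEStronglyMeasurable u μ) {p p₀ Q : ℝ} (hp : 0 < p) (hpp₀ : p < p₀) (hQ : p₀ < Q) :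
    eLpNorm u (ENNReal.ofReal p₀) μ ≤
      eLpNorm u (ENNReal.ofReal p) μ ^ ((Q - p₀) / (Q - p) * p / p₀) *
      eLpNorm u (ENNReal.ofReal Q) μ ^ (1 - (Q - p₀) / (Q - p) * p / p₀) := by
  have hp₀ : 0 < p₀ := hp.trans hpp₀
  have hQ0 : 0 < Q := hp₀.trans hQ
  set a := (Q - p₀) / (Q - p) with ha_def
  set b := (p₀ - p) / (Q - p) with hb_def
  have hQp : (0:ℝ) < Q - p := by linarith
  have ha : 0 < a := div_pos (by linarith) hQp
  have hb : 0 < b := div_pos (by linarith) hQp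
  have hab : a + b = 1 := by rw [ha_def, hb_def]; field_simp; ring
  have hkey : p * a + Q * b = p₀ := by rw [ha_def, hb_def]; field_simp; ring
  have hX : AEMeasurable (fun x => (‖u x‖₊ : ℝ≥0∞) ^ p) μ := hu.enorm.pow_const p
  have hY : AEMeasurable (fun x => (‖u x‖₊ : ℝ≥0∞) ^ Q) μ := hu.enorm.pow_const Q
  have hZ : ∫⁻ x, (‖u x‖₊ : ℝ≥0∞) ^ p₀ ∂μ ≤
      (∫⁻ x, (‖u x‖₊ : ℝ≥0∞) ^ p ∂μ) ^ a * (∫⁻ x, (‖u x‖₊ : ℝ≥0∞) ^ Q ∂μ) ^ b := by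
    have := lintegral_mul_norm_pow_le hX hY ha.le hb.le hab
    refine le_trans (le_of_eq ?_) this
    refine lintegral_congr fun x => ?_
    rw [← ENNReal.rpow_mul, ← ENNReal.rpow_mul,
      ← ENNReal.rpow_add_of_nonneg _ _ (by positivity) (by positivity), hkey]
  rw [eLpNorm_eq_lintegral_rpow_enorm_toReal (ENNReal.ofReal_pos.2 hp₀).ne' ENNReal.ofReal_ne_top,
    eLpNorm_eq_lintegral_rpow_enorm_toReal (ENNReal.ofReal_pos.2 hp).ne' ENNReal.ofReal_ne_top,
    eLpNorm_eq_lintegral_rpow_enorm_toReal (ENNReal.ofReal_pos.2 hQ0).ne' ENNReal.ofReal_ne_top,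
    ENNReal.toReal_ofReal hp₀.le, ENNReal.toReal_ofReal hp.le, ENNReal.toReal_ofReal hQ0.le]
  have h1τ : 1 - a * p / p₀ = b * Q / p₀ := by
    field_simp
    linarith [hkey]
  calc (∫⁻ x, (‖u x‖₊ : ℝ≥0∞) ^ p₀ ∂μ) ^ (1 / p₀)
      ≤ ((∫⁻ x, (‖u x‖₊ : ℝ≥0∞) ^ p ∂μ) ^ a * (∫⁻ x, (‖u x‖₊ : ℝ≥0∞) ^ Q ∂μ) ^ b) ^ (1 / p₀) :=
        ENNReal.rpow_le_rpow hZ (by positivity)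
    _ = ((∫⁻ x, (‖u x‖₊ : ℝ≥0∞) ^ p ∂μ) ^ (1 / p)) ^ (a * p / p₀) *
        ((∫⁻ x, (‖u x‖₊ : ℝ≥0∞) ^ Q ∂μ) ^ (1 / Q)) ^ (1 - a * p / p₀) := by
        rw [ENNReal.mul_rpow_of_nonneg _ _ (by positivity), ← ENNReal.rpow_mul,
          ← ENNReal.rpow_mul, ← ENNReal.rpow_mul, ← ENNReal.rpow_mul, h1τ]
        congr 1
        · congr 1
          field_simp
          try ring
        · congr 1
          field_simp
          try ring

private lemma interp_top {α : Type*} [MeasurableSpace α] {μ : Measure α} {u : α → ℂ}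
    (hu : AEStronglyMeasurable u μ) {p p₀ : ℝ} (hp : 0 < p) (hpp₀ : p < p₀) :
    eLpNorm u (ENNReal.ofReal p₀) μ ≤
      eLpNorm u (ENNReal.ofReal p) μ ^ (p / p₀) * eLpNorm u ⊤ μ ^ (1 - p / p₀) := by
  have hp₀ : 0 < p₀ := hp.trans hpp₀
  set Y := eLpNormEssSup u μ with hY_def
  have hae : ∀ᵐ x ∂μ, (‖u x‖₊ : ℝ≥0∞) ≤ Y := ae_le_eLpNormEssSup
  have hZ : ∫⁻ x, (‖u x‖₊ : ℝ≥0∞) ^ p₀ ∂μ ≤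
      (∫⁻ x, (‖u x‖₊ : ℝ≥0∞) ^ p ∂μ) * Y ^ (p₀ - p) := by
    rw [← lintegral_mul_const'' _ (by have hX : AEMeasurable (fun x => (‖u x‖₊ : ℝ≥0∞) ^ p) μ := hu.enorm.pow_const p; exact hX)]
    refine lintegral_mono_ae (hae.mono fun x hx => ?_)
    calc (‖u x‖₊ : ℝ≥0∞) ^ p₀ = (‖u x‖₊ : ℝ≥0∞) ^ p * (‖u x‖₊ : ℝ≥0∞) ^ (p₀ - p) := by
          rw [← ENNReal.rpow_add_of_nonneg _ _ hp.le (by linarith)]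
          norm_num
      _ ≤ (‖u x‖₊ : ℝ≥0∞) ^ p * Y ^ (p₀ - p) :=
          mul_le_mul_right (ENNReal.rpow_le_rpow hx (by linarith)) _
  rw [eLpNorm_exponent_top, ← hY_def,
    eLpNorm_eq_lintegral_rpow_enorm_toReal (ENNReal.ofReal_pos.2 hp₀).ne' ENNReal.ofReal_ne_top,
    eLpNorm_eq_lintegral_rpow_enorm_toReal (ENNReal.ofReal_pos.2 hp).ne' ENNReal.ofReal_ne_top,
    ENNReal.toReal_ofReal hp₀.le, ENNReal.toReal_ofReal hp.le]
  calc (∫⁻ x, (‖u x‖₊ : ℝ≥0∞) ^ p₀ ∂μ) ^ (1 / p₀)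
      ≤ ((∫⁻ x, (‖u x‖₊ : ℝ≥0∞) ^ p ∂μ) * Y ^ (p₀ - p)) ^ (1 / p₀) :=
        ENNReal.rpow_le_rpow hZ (by positivity)
    _ = ((∫⁻ x, (‖u x‖₊ : ℝ≥0∞) ^ p ∂μ) ^ (1 / p)) ^ (p / p₀) * Y ^ (1 - p / p₀) := by
        rw [ENNReal.mul_rpow_of_nonneg _ _ (by positivity), ← ENNReal.rpow_mul,
          ← ENNReal.rpow_mul]
        congr 1
        · congr 1
          field_simp
        · congr 1
          field_simp
          try ring

private lemma core (d : ℕ) (p p₀ : ℝ) (q : ℝ≥0∞) (C₀ : ℝ) (hC₀ : 0 < C₀)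
    (τ : ℝ) (hτ0 : 0 < τ) (hτ1 : τ < 1)
    (hα : 0 ≤ (d : ℝ) / p - (d : ℝ) / q.toReal)
    (hατ : ((d : ℝ) / p - (d : ℝ) / q.toReal) * τ = (d : ℝ) / p₀ - (d : ℝ) / q.toReal)
    (hint : ∀ (x₀ : EuclideanSpace ℝ (Fin d)) (s : ℝ) (u : EuclideanSpace ℝ (Fin d) → ℂ),
      AEStronglyMeasurable u (volume.restrict (ball x₀ s)) →
      eLpNorm u (ENNReal.ofReal p₀) (volume.restrict (ball x₀ s)) ≤
        eLpNorm u (ENNReal.ofReal p) (volume.restrict (ball x₀ s)) ^ τ *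
        eLpNorm u q (volume.restrict (ball x₀ s)) ^ (1 - τ)) :
    ∃ C : ℝ, 0 < C ∧
      ∀ (x₀ : EuclideanSpace ℝ (Fin d)) (R : ℝ), 0 < R →
        ∀ u : EuclideanSpace ℝ (Fin d) → ℂ,
          MemLp u q (volume.restrict (ball x₀ R)) →
          ∀ F : ℝ≥0∞,
            (∀ ρ r : ℝ, 0 < ρ → ρ < r → r < R →
              eLpNorm u q (volume.restrict (ball x₀ ρ)) ≤
                ENNReal.ofReal (C₀ / (r - ρ) ^ ((d : ℝ) / p₀ - (d : ℝ) / q.toReal)) *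
                  eLpNorm u (ENNReal.ofReal p₀) (volume.restrict (ball x₀ r)) + F) →
            ∀ ρ r : ℝ, 0 < ρ → ρ < r → r < R →
              eLpNorm u q (volume.restrict (ball x₀ ρ)) ≤
                ENNReal.ofReal (C / (r - ρ) ^ ((d : ℝ) / p - (d : ℝ) / q.toReal)) *
                  eLpNorm u (ENNReal.ofReal p) (volume.restrict (ball x₀ r))
                  + ENNReal.ofReal C * F := by
  set α : ℝ := (d : ℝ) / p - (d : ℝ) / q.toReal with hα_def
  set ε : ℝ := (1/2 : ℝ) * (1/2 : ℝ) ^ α with hε_def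
  have hε0 : 0 < ε := by positivity
  have hεhalf : ε ≤ 1/2 := by
    have h1 : (1/2 : ℝ) ^ α ≤ 1 := Real.rpow_le_one (by norm_num) (by norm_num) hα
    nlinarith
  have hε1 : ε < 1 := hεhalf.trans_lt (by norm_num)
  set K : ℝ := (C₀ * ε ^ (-(1 - τ))) ^ τ⁻¹ with hK_def
  have hK0 : 0 < K := Real.rpow_pos_of_pos (by positivity) _
  set K₂ : ℝ := K * ((1/2 : ℝ) ^ α)⁻¹ with hK₂_def
  have hK₂0 : 0 < K₂ := by positivity
  refine ⟨max (K₂ * 2) 2, lt_of_lt_of_le two_pos (le_max_right _ _), ?_⟩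
  intro x₀ R hR u hMem F hyp ρ r hρ hρr hrR
  set t : ℝ := r - ρ with ht_def
  have ht : 0 < t := by simp only [ht_def]; linarith
  set seq : ℕ → ℝ := fun n => r - t * (1/2 : ℝ) ^ n with hseq
  have hseq0 : seq 0 = ρ := by simp only [hseq, pow_zero, mul_one, ht_def]; ring
  have hlt : ∀ n, seq n < r := fun n => by
    simp only [hseq]
    nlinarith [pow_pos (by norm_num : (0:ℝ) < 1/2) n, ht]
  have hge : ∀ n, ρ ≤ seq n := fun n => by
    have h1 : (1/2 : ℝ) ^ n ≤ 1 := pow_le_one₀ (by norm_num) (by norm_num)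
    simp only [hseq, ht_def]
    nlinarith
  have hpos : ∀ n, 0 < seq n := fun n => hρ.trans_le (hge n)
  have hmono : ∀ n, seq n < seq (n + 1) := fun n => by
    simp only [hseq, pow_succ]
    nlinarith [pow_pos (by norm_num : (0:ℝ) < 1/2) n, ht]
  have hdiff : ∀ n, seq (n + 1) - seq n = t * (1/2 : ℝ) ^ (n + 1) := fun n => by
    simp only [hseq, pow_succ]; ring
  set g : ℕ → ℝ≥0∞ := fun n => eLpNorm u q (volume.restrict (ball x₀ (seq n))) with hg_def
  set M : ℝ≥0∞ := eLpNorm u q (volume.restrict (ball x₀ R)) with hM_def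
  have hM : M ≠ ⊤ := hMem.2.ne
  have hg : ∀ n, g n ≤ M := fun n =>
    eLpNorm_mono_measure _
      (Measure.restrict_mono (ball_subset_ball ((hlt n).trans hrR).le) le_rfl)
  set X : ℝ≥0∞ := eLpNorm u (ENNReal.ofReal p) (volume.restrict (ball x₀ r)) with hX_def
  set E : ℝ≥0∞ := ENNReal.ofReal ε with hE_def
  have step : ∀ n, g n ≤ E * g (n + 1) +
      (ENNReal.ofReal (K / (t * (1/2 : ℝ) ^ (n + 1)) ^ α) * X + F) := by
    intro n
    have hAES : AEStronglyMeasurable u (volume.restrict (ball x₀ (seq (n + 1)))) :=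
      hMem.1.mono_measure
        (Measure.restrict_mono (ball_subset_ball ((hlt (n + 1)).trans hrR).le) le_rfl)
    have h1 := hyp (seq n) (seq (n + 1)) (hpos n) (hmono n) ((hlt (n + 1)).trans hrR)
    rw [← hατ, hdiff n] at h1
    have h2 := hint x₀ (seq (n + 1)) u hAES
    have hXmono : eLpNorm u (ENNReal.ofReal p) (volume.restrict (ball x₀ (seq (n + 1)))) ≤ X :=
      eLpNorm_mono_measure _ (Measure.restrict_mono (ball_subset_ball (hlt (n + 1)).le) le_rfl)
    set δ : ℝ := t * (1/2 : ℝ) ^ (n + 1) with hδ_def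
    have hδ : 0 < δ := by positivity
    have hcoef : ENNReal.ofReal (C₀ / δ ^ (α * τ)) =
        ENNReal.ofReal (K / δ ^ α) ^ τ * E ^ (1 - τ) := by
      rw [hE_def, ENNReal.ofReal_rpow_of_pos (by positivity),
        ENNReal.ofReal_rpow_of_pos hε0, ← ENNReal.ofReal_mul (by positivity)]
      congr 1
      have e1 : (δ ^ α) ^ τ = δ ^ (α * τ) := (Real.rpow_mul hδ.le _ _).symm
      have e2 : K ^ τ = C₀ * ε ^ (-(1 - τ)) := by
        rw [hK_def, ← Real.rpow_mul (by positivity), inv_mul_cancel₀ hτ0.ne', Real.rpow_one]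
      rw [Real.div_rpow hK0.le (Real.rpow_nonneg hδ.le α), e1, e2, Real.rpow_neg hε0.le]
      have hεpow : (0:ℝ) < ε ^ (1 - τ) := Real.rpow_pos_of_pos hε0 _
      have hδpow : (0:ℝ) < δ ^ (α * τ) := Real.rpow_pos_of_pos hδ _
      field_simp
      try ring
    calc g n ≤ ENNReal.ofReal (C₀ / δ ^ (α * τ)) *
          eLpNorm u (ENNReal.ofReal p₀) (volume.restrict (ball x₀ (seq (n + 1)))) + F := h1
      _ ≤ ENNReal.ofReal (C₀ / δ ^ (α * τ)) * (X ^ τ * g (n + 1) ^ (1 - τ)) + F := by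
          refine add_le_add_left (mul_le_mul_right (h2.trans ?_) _) F
          exact mul_le_mul_left (ENNReal.rpow_le_rpow hXmono hτ0.le) _
      _ = (ENNReal.ofReal (K / δ ^ α) * X) ^ τ * (E * g (n + 1)) ^ (1 - τ) + F := by
          rw [hcoef, ENNReal.mul_rpow_of_nonneg _ _ hτ0.le,
            ENNReal.mul_rpow_of_nonneg _ _ (by linarith : (0:ℝ) ≤ 1 - τ)]
          ring
      _ ≤ (ENNReal.ofReal (K / δ ^ α) * X + E * g (n + 1)) + F :=
          add_le_add_left (young2 hτ0.le hτ1.le) F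
      _ = E * g (n + 1) + (ENNReal.ofReal (K / δ ^ α) * X + F) := by ring
  have hE1 : E < 1 := by
    rw [hE_def]
    exact ENNReal.ofReal_lt_one.2 hε1
  have hkey := iterate_nat g M hM hg E hE1 _ step
  have hg0 : eLpNorm u q (volume.restrict (ball x₀ ρ)) = g 0 := by
    simp only [hg_def, hseq0]
  rw [hg0]
  refine hkey.trans ?_
  -- now bound the series
  have hreal : ∀ k : ℕ, ε ^ k * (K / (t * (1/2 : ℝ) ^ (k + 1)) ^ α) = K₂ / t ^ α * (1/2 : ℝ) ^ k := by
    intro k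
    have hcomm : ((1/2 : ℝ) ^ α) ^ k = ((1/2 : ℝ) ^ k) ^ α := by
      rw [← Real.rpow_natCast ((1/2 : ℝ) ^ α) k, ← Real.rpow_natCast (1/2 : ℝ) k,
        ← Real.rpow_mul (by norm_num), ← Real.rpow_mul (by norm_num), mul_comm]
    have h1 : ε ^ k = (1/2 : ℝ) ^ k * ((1/2 : ℝ) ^ k) ^ α := by
      rw [hε_def, mul_pow, hcomm]
    have h2 : (t * (1/2 : ℝ) ^ (k + 1)) ^ α = t ^ α * ((1/2 : ℝ) ^ k) ^ α * (1/2 : ℝ) ^ α := by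
      rw [pow_succ, ← mul_assoc, Real.mul_rpow (by positivity) (by norm_num),
        Real.mul_rpow ht.le (by positivity)]
    rw [h1, h2, hK₂_def]
    have c1 : (0:ℝ) < ((1/2 : ℝ) ^ k) ^ α := by positivity
    have c2 : (0:ℝ) < (1/2 : ℝ) ^ α := by positivity
    have c3 : (0:ℝ) < t ^ α := by positivity
    field_simp
  have heq : ∀ k : ℕ, E ^ k * (ENNReal.ofReal (K / (t * (1/2 : ℝ) ^ (k + 1)) ^ α) * X + F) =
      ENNReal.ofReal (K₂ / t ^ α) * X * ENNReal.ofReal ((1/2 : ℝ) ^ k) + E ^ k * F := by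
    intro k
    rw [mul_add]
    congr 1
    rw [hE_def, ← ENNReal.ofReal_pow hε0.le, ← mul_assoc,
      ← ENNReal.ofReal_mul (by positivity), hreal k,
      ENNReal.ofReal_mul (by positivity), mul_right_comm]
  have hgeo : ∑' k : ℕ, ENNReal.ofReal ((1/2 : ℝ) ^ k) = 2 := by
    have : ∀ k : ℕ, ENNReal.ofReal ((1/2 : ℝ) ^ k) = ENNReal.ofReal (1/2) ^ k := fun k =>
      ENNReal.ofReal_pow (by norm_num) k
    simp_rw [this, ENNReal.tsum_geometric]
    rw [show (1 : ℝ≥0∞) - ENNReal.ofReal (1/2) = ENNReal.ofReal (1/2) by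
        rw [← ENNReal.ofReal_one, ← ENNReal.ofReal_sub _ (by norm_num)]; norm_num,
      ← ENNReal.ofReal_inv_of_pos (by norm_num)]
    norm_num
  have hEsum : (∑' k : ℕ, E ^ k) ≤ 2 := by
    rw [ENNReal.tsum_geometric]
    calc (1 - E)⁻¹ ≤ (1 - ENNReal.ofReal (1/2))⁻¹ := by
          refine ENNReal.inv_le_inv' (tsub_le_tsub_left ?_ 1)
          rw [hE_def]
          exact ENNReal.ofReal_le_ofReal hεhalf
      _ = 2 := by
          rw [show (1 : ℝ≥0∞) - ENNReal.ofReal (1/2) = ENNReal.ofReal (1/2) by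
              rw [← ENNReal.ofReal_one, ← ENNReal.ofReal_sub _ (by norm_num)]; norm_num,
            ← ENNReal.ofReal_inv_of_pos (by norm_num)]
          norm_num
  calc (∑' k : ℕ, E ^ k * (ENNReal.ofReal (K / (t * (1/2 : ℝ) ^ (k + 1)) ^ α) * X + F))
      = ENNReal.ofReal (K₂ / t ^ α) * X * (∑' k : ℕ, ENNReal.ofReal ((1/2 : ℝ) ^ k)) +
        (∑' k : ℕ, E ^ k) * F := by
        simp_rw [heq]
        rw [ENNReal.tsum_add, ENNReal.tsum_mul_left, ENNReal.tsum_mul_right]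
    _ ≤ ENNReal.ofReal (K₂ / t ^ α) * X * 2 + 2 * F := by
        gcongr
        exact hgeo.le
    _ ≤ ENNReal.ofReal (max (K₂ * 2) 2 / t ^ α) * X + ENNReal.ofReal (max (K₂ * 2) 2) * F := by
        refine add_le_add ?_ ?_
        · have h2 : (2 : ℝ≥0∞) = ENNReal.ofReal 2 := by norm_num
          rw [mul_right_comm, h2, ← ENNReal.ofReal_mul (by positivity), div_mul_eq_mul_div]
          refine mul_le_mul_left (ENNReal.ofReal_le_ofReal ?_) X
          gcongr
          exact le_max_left _ _
        · refine mul_le_mul_left ?_ F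
          have h2 : (2 : ℝ≥0∞) = ENNReal.ofReal 2 := by norm_num
          rw [h2]
          exact ENNReal.ofReal_le_ofReal (le_max_right _ _)

/-- (Self-improvement of reverse Hölder inequalities; Lemma 4.4 of the
paper.)  Let `0 < p₀ < q ≤ ∞` and suppose `u ∈ L^q(B(x₀,R))` satisfies, for all
`0 < ρ < r < R`,
`‖u‖_{L^q(B(x₀,ρ))} ≤ C₀ (r-ρ)^{-(d/p₀ - d/q)} ‖u‖_{L^{p₀}(B(x₀,r))} + F`.
Then for every `0 < p ≤ p₀` there is `C = C(p,p₀,q,C₀)` such that for all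
`0 < ρ < r < R`,
`‖u‖_{L^q(B(x₀,ρ))} ≤ C (r-ρ)^{-(d/p - d/q)} ‖u‖_{L^p(B(x₀,r))} + C F`.
(The convention `d/q = 0` for `q = ∞` is realized via `q.toReal = 0`.) -/
theorem stmt5 (d : ℕ) (p₀ p : ℝ) (q : ℝ≥0∞) (hp₀ : 0 < p₀) (hq : ENNReal.ofReal p₀ < q)
    (hp : 0 < p) (hpp₀ : p ≤ p₀) (C₀ : ℝ) (hC₀ : 0 < C₀) :
    ∃ C : ℝ, 0 < C ∧
      ∀ (x₀ : EuclideanSpace ℝ (Fin d)) (R : ℝ), 0 < R →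
        ∀ u : EuclideanSpace ℝ (Fin d) → ℂ,
          MemLp u q (volume.restrict (ball x₀ R)) →
          ∀ F : ℝ≥0∞,
            (∀ ρ r : ℝ, 0 < ρ → ρ < r → r < R →
              eLpNorm u q (volume.restrict (ball x₀ ρ)) ≤
                ENNReal.ofReal (C₀ / (r - ρ) ^ ((d : ℝ) / p₀ - (d : ℝ) / q.toReal)) *
                  eLpNorm u (ENNReal.ofReal p₀) (volume.restrict (ball x₀ r)) + F) →
            ∀ ρ r : ℝ, 0 < ρ → ρ < r → r < R →
              eLpNorm u q (volume.restrict (ball x₀ ρ)) ≤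
                ENNReal.ofReal (C / (r - ρ) ^ ((d : ℝ) / p - (d : ℝ) / q.toReal)) *
                  eLpNorm u (ENNReal.ofReal p) (volume.restrict (ball x₀ r))
                  + ENNReal.ofReal C * F := by
  rcases eq_or_lt_of_le hpp₀ with heq | hlt
  · -- trivial case p = p₀
    subst heq
    refine ⟨C₀ + 1, by linarith, ?_⟩
    intro x₀ R hR u hMem F hyp ρ r hρ hρr hrR
    refine (hyp ρ r hρ hρr hrR).trans (add_le_add ?_ ?_)
    · refine mul_le_mul_left (ENNReal.ofReal_le_ofReal ?_) _
      have htρ : (0:ℝ) < r - ρ := by linarith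
      gcongr
      linarith
    · calc F = 1 * F := (one_mul F).symm
        _ ≤ ENNReal.ofReal (C₀ + 1) * F := by
            refine mul_le_mul_left ?_ F
            rw [← ENNReal.ofReal_one]
            exact ENNReal.ofReal_le_ofReal (by linarith)
  · -- main case p < p₀
    rcases eq_or_ne q ∞ with hq' | hq'
    · subst hq'
      refine core d p p₀ ⊤ C₀ hC₀ (p / p₀) (by positivity) ((div_lt_one hp₀).2 hlt)
        ?_ ?_ ?_
      · simp only [ENNReal.toReal_top, _root_.div_zero, sub_zero]
        positivity
      · simp only [ENNReal.toReal_top, _root_.div_zero, sub_zero]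
        field_simp
      · intro x₀ s u hu
        exact interp_top hu hp hlt
    · have hQ : p₀ < q.toReal := (ENNReal.ofReal_lt_iff_lt_toReal hp₀.le hq').1 hq
      have hQ0 : 0 < q.toReal := hp₀.trans hQ
      have hpQ : (0:ℝ) < q.toReal - p := by linarith
      refine core d p p₀ q C₀ hC₀ ((q.toReal - p₀) / (q.toReal - p) * p / p₀)
        (div_pos (mul_pos (div_pos (by linarith) hpQ) hp) hp₀) ?_ ?_ ?_ ?_
      · rw [div_mul_eq_mul_div, div_div, div_lt_one (by positivity)]
        nlinarith
      · rw [sub_nonneg]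
        gcongr
        linarith
      · field_simp
      · intro x₀ s u hu
        have h := interp_fin hu hp hlt hQ
        rwa [ENNReal.ofReal_toReal hq'] at h
end
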